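/- For every r > 1 and every finite collection of distinct primes p_1, …, p_M, there exists a weight w such that w ∈ RH_r^{p_i} for every i = 1, …, M, yet w ∉ RH_s for every s > 1; in particular, the intersection of the classes RH_r^{p_1}, …, RH_r^{p_M} is not equal to RH_r, and the intersection of RH_1^{p_1}, …, RH_1^{p_M} is not equal to RH_1. -/

import Mathlib

open MeasureTheory Set

noncomputable section

/-- The `n`-adic interval `[(k-1)/n^m, k/n^m)` with `m, k : ℤ`. -/
def adicInterval (n : ℕ) (m k : ℤ) : Set ℝ :=
  Set.Ico (((k : ℝ) - 1) / (n : ℝ) ^ m) ((k : ℝ) / (n : ℝ) ^ m)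

/-- The `j`-th `n`-adic child (`1 ≤ j ≤ n`) of the `n`-adic interval with parameters `m, k`. -/
def adicChild (n : ℕ) (m k : ℤ) (j : ℕ) : Set ℝ :=
  Set.Ico (((k : ℝ) - 1) / (n : ℝ) ^ m + ((j : ℝ) - 1) / (n : ℝ) ^ (m + 1))
    (((k : ℝ) - 1) / (n : ℝ) ^ m + (j : ℝ) / (n : ℝ) ^ (m + 1))

/-- A measure on `ℝ` is doubling if there is `C > 0` with `μ(2I) ≤ C·μ(I)` for every
bounded nondegenerate interval `I`, where `2I` has the same midpoint and twice the length. -/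
def IsDoubling (μ : Measure ℝ) : Prop :=
  ∃ C : ℝ, 0 < C ∧ ∀ a b : ℝ, a < b →
    μ (Set.Ico (a - (b - a) / 2) (b + (b - a) / 2)) ≤ ENNReal.ofReal C * μ (Set.Ico a b)

/-- A measure on `ℝ` is `n`-adic doubling if there is `C > 0` such that for every `n`-adic
interval and any two of its `n`-adic children, the measures of the children are comparable. -/
def IsAdicDoubling (n : ℕ) (μ : Measure ℝ) : Prop :=
  ∃ C : ℝ, 0 < C ∧ ∀ m k : ℤ, ∀ j₁ j₂ : ℕ, 1 ≤ j₁ → j₁ ≤ n → 1 ≤ j₂ → j₂ ≤ n →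
    μ (adicChild n m k j₁) ≤ ENNReal.ofReal C * μ (adicChild n m k j₂)

/-- A weight: a nonnegative locally integrable function on `ℝ`. -/
def IsWeight (w : ℝ → ℝ) : Prop :=
  (∀ x, 0 ≤ w x) ∧ LocallyIntegrable w volume

/-- The reverse Hölder class `RH_r`: `(⨍_I w^r)^(1/r) ≤ C ⨍_I w` over all bounded
nondegenerate intervals `I`. -/
def MemRH (r : ℝ) (w : ℝ → ℝ) : Prop :=
  ∃ C : ℝ, 0 < C ∧ ∀ a b : ℝ, a < b →
    (⨍ x in Set.Ico a b, w x ^ r) ^ (1 / r) ≤ C * ⨍ x in Set.Ico a b, w x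

/-- The `p`-adic reverse Hölder class `RH_r^p`: the reverse Hölder inequality over all
`p`-adic intervals, together with `w dx` being `p`-adic doubling. -/
def MemRHadic (r : ℝ) (p : ℕ) (w : ℝ → ℝ) : Prop :=
  IsAdicDoubling p (volume.withDensity fun x => ENNReal.ofReal (w x)) ∧
  ∃ C : ℝ, 0 < C ∧ ∀ m k : ℤ,
    (⨍ x in adicInterval p m k, w x ^ r) ^ (1 / r) ≤ C * ⨍ x in adicInterval p m k, w x

/-- The Muckenhoupt class `A_r`: the `A_r` products over all bounded nondegenerate intervals
are uniformly bounded. -/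
def MemA (r : ℝ) (w : ℝ → ℝ) : Prop :=
  ∃ C : ℝ, ∀ a b : ℝ, a < b →
    (⨍ x in Set.Ico a b, w x) *
      (⨍ x in Set.Ico a b, w x ^ (-(1 / (r - 1)))) ^ (r - 1) ≤ C

/-- The `p`-adic Muckenhoupt class `A_r^p`: the `A_r` products over all `p`-adic intervals
are uniformly bounded. -/
def MemAadic (r : ℝ) (p : ℕ) (w : ℝ → ℝ) : Prop :=
  ∃ C : ℝ, ∀ m k : ℤ,
    (⨍ x in adicInterval p m k, w x) *
      (⨍ x in adicInterval p m k, w x ^ (-(1 / (r - 1)))) ^ (r - 1) ≤ C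


namespace RHAux

/-- The counterexample weight: `|x|` for `x < 0`, `1` for `x ≥ 0`. -/
def W : ℝ → ℝ := fun x => if x < 0 then -x else 1

lemma W_nonneg (x : ℝ) : 0 ≤ W x := by
  unfold W; split <;> linarith

lemma W_meas : Measurable W := by
  unfold W
  exact Measurable.ite measurableSet_Iio measurable_neg measurable_const

lemma W_of_neg {x : ℝ} (hx : x < 0) : W x = -x := if_pos hx

lemma W_of_nonneg {x : ℝ} (hx : 0 ≤ x) : W x = 1 := if_neg (not_lt.2 hx)

lemma W_le {a b x : ℝ} (hx : x ∈ Ico a b) : W x ≤ max |a| 1 := by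
  unfold W; split
  · have : -x ≤ -a := by linarith [hx.1]
    exact le_trans (le_trans this (neg_le_abs a)) (le_max_left _ _)
  · exact le_max_right _ _

lemma W_int (a b : ℝ) : IntegrableOn W (Ico a b) := by
  refine Integrable.mono' (g := fun _ => max |a| 1) (integrableOn_const ?_)
    (W_meas.aestronglyMeasurable) ?_
  · rw [Real.volume_Ico]; exact ENNReal.ofReal_ne_top
  · refine (ae_restrict_iff' measurableSet_Ico).2 (ae_of_all _ fun x hx => ?_)
    rw [Real.norm_eq_abs, abs_of_nonneg (W_nonneg x)]
    exact W_le hx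

lemma W_loc : LocallyIntegrable W volume := by
  intro x
  exact ⟨Ico (x-1) (x+1), Ico_mem_nhds (by linarith) (by linarith), W_int _ _⟩

lemma Wr_meas {s : ℝ} (hs : 0 ≤ s) : Measurable (fun x => W x ^ s) :=
  (Real.continuous_rpow_const hs).measurable.comp W_meas

lemma Wr_nonneg (s x : ℝ) : 0 ≤ W x ^ s := Real.rpow_nonneg (W_nonneg x) s

lemma Wr_int {s : ℝ} (hs : 0 ≤ s) (a b : ℝ) : IntegrableOn (fun x => W x ^ s) (Ico a b) := by
  refine Integrable.mono' (g := fun _ => (max |a| 1) ^ s) (integrableOn_const ?_)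
    ((Wr_meas hs).aestronglyMeasurable) ?_
  · rw [Real.volume_Ico]; exact ENNReal.ofReal_ne_top
  · refine (ae_restrict_iff' measurableSet_Ico).2 (ae_of_all _ fun x hx => ?_)
    rw [Real.norm_eq_abs, abs_of_nonneg (Wr_nonneg s x)]
    exact Real.rpow_le_rpow (W_nonneg x) (W_le hx) hs

lemma int_left {a b : ℝ} (hab : a ≤ b) (hb : b ≤ 0) :
    ∫ x in Ico a b, W x = (a^2 - b^2)/2 := by
  rw [setIntegral_congr_fun measurableSet_Ico (g := fun x => -x)
      (fun x hx => W_of_neg (lt_of_lt_of_le hx.2 hb))]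
  rw [integral_Ico_eq_integral_Ioo, ← integral_Ioc_eq_integral_Ioo,
    ← intervalIntegral.integral_of_le hab, intervalIntegral.integral_neg, integral_id]
  ring

lemma int_right {a b : ℝ} (ha : 0 ≤ a) (hab : a ≤ b) :
    ∫ x in Ico a b, W x = b - a := by
  rw [setIntegral_congr_fun measurableSet_Ico (g := fun _ => (1:ℝ))
      (fun x hx => W_of_nonneg (le_trans ha hx.1))]
  rw [setIntegral_const, measureReal_def, Real.volume_Ico, ENNReal.toReal_ofReal (by linarith), smul_eq_mul,
    mul_one]

lemma int_rpow_right {a b : ℝ} (s : ℝ) (ha : 0 ≤ a) (hab : a ≤ b) :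
    ∫ x in Ico a b, W x ^ s = b - a := by
  rw [setIntegral_congr_fun measurableSet_Ico (g := fun _ => (1:ℝ))
      (fun x hx => by rw [W_of_nonneg (le_trans ha hx.1), Real.one_rpow])]
  rw [setIntegral_const, measureReal_def, Real.volume_Ico, ENNReal.toReal_ofReal (by linarith), smul_eq_mul,
    mul_one]

lemma avg_eq (f : ℝ → ℝ) {a b : ℝ} (hab : a < b) :
    ⨍ x in Ico a b, f x = (b - a)⁻¹ * ∫ x in Ico a b, f x := by
  rw [setAverage_eq, measureReal_def, Real.volume_Ico, ENNReal.toReal_ofReal (by linarith), smul_eq_mul]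

lemma Ico_measure (a b : ℝ) :
    (volume.withDensity fun x => ENNReal.ofReal (W x)) (Ico a b)
      = ENNReal.ofReal (∫ x in Ico a b, W x) := by
  rw [withDensity_apply _ measurableSet_Ico,
    ← ofReal_integral_eq_lintegral_ofReal (W_int a b) (Filter.Eventually.of_forall W_nonneg)]

lemma child_measure (q : ℕ) (m k : ℤ) (j : ℕ) :
    (volume.withDensity fun x => ENNReal.ofReal (W x)) (adicChild q m k j)
      = ENNReal.ofReal (∫ x in adicChild q m k j, W x) := Ico_measure _ _

lemma adic_doubling (q : ℕ) (hq : 2 ≤ q) :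
    IsAdicDoubling q (volume.withDensity fun x => ENNReal.ofReal (W x)) := by
  have hP : (2:ℝ) ≤ (q:ℝ) := by exact_mod_cast hq
  refine ⟨2*q, by positivity, fun m k j₁ j₂ hj₁l hj₁q hj₂l hj₂q => ?_⟩
  have hE : (0:ℝ) < (q:ℝ)^m := zpow_pos (by linarith) m
  have hF : (0:ℝ) < (q:ℝ)^(m+1) := zpow_pos (by linarith) (m+1)
  have hEF : ((q:ℝ))^(m+1) = (q:ℝ)^m * q := zpow_add_one₀ (by positivity) m
  set E := (q:ℝ)^m with hEdef
  set F := (q:ℝ)^(m+1) with hFdef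
  set A := (((k:ℝ)) - 1)/E with hAdef
  set u := 1/F with hudef
  have hu : 0 < u := by positivity
  have hqu : (q:ℝ) * u = 1/E := by
    rw [hudef, hEF]; field_simp
  rw [child_measure, child_measure]
  have hchild : ∀ j : ℕ, adicChild q m k j = Ico (A + ((j:ℝ)-1)*u) (A + (j:ℝ)*u) := by
    intro j; unfold adicChild
    rw [← hEdef, ← hFdef, ← hAdef]
    rw [div_eq_mul_one_div ((j:ℝ)-1) F, div_eq_mul_one_div (j:ℝ) F, ← hudef]
  have hintj : ∀ j : ℕ, 1 ≤ j → j ≤ q →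
      ∫ x in adicChild q m k j, W x
        = if k ≤ 0 then ((A + ((j:ℝ)-1)*u)^2 - (A + (j:ℝ)*u)^2)/2 else u := by
    intro j hjl hjq
    have hj1 : (1:ℝ) ≤ (j:ℝ) := by exact_mod_cast hjl
    have hjq' : (j:ℝ) ≤ (q:ℝ) := by exact_mod_cast hjq
    have hab : A + ((j:ℝ)-1)*u ≤ A + (j:ℝ)*u := by nlinarith
    rw [hchild j]
    by_cases hk : k ≤ 0
    · rw [if_pos hk]
      have hk' : (k:ℝ) ≤ 0 := by exact_mod_cast hk
      have hb0 : A + (j:ℝ)*u ≤ 0 := by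
        have h1 : A + (j:ℝ)*u ≤ A + (q:ℝ)*u := by nlinarith
        have h2 : A + (q:ℝ)*u = (k:ℝ)/E := by rw [hqu, hAdef]; field_simp; ring
        have h3 : (k:ℝ)/E ≤ 0 := div_nonpos_of_nonpos_of_nonneg hk' hE.le
        linarith
      exact int_left hab hb0
    · rw [if_neg hk]
      push_neg at hk
      have hk1 : (1:ℝ) ≤ (k:ℝ) := by exact_mod_cast hk
      have ha0 : 0 ≤ A + ((j:ℝ)-1)*u := by
        have : 0 ≤ A := div_nonneg (by linarith) (le_of_lt hE)
        nlinarith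
      rw [int_right ha0 hab]; ring
  rw [hintj j₁ hj₁l hj₁q, hintj j₂ hj₂l hj₂q]
  rw [← ENNReal.ofReal_mul (by positivity)]
  apply ENNReal.ofReal_le_ofReal
  have hj₁1 : (1:ℝ) ≤ (j₁:ℝ) := by exact_mod_cast hj₁l
  have hj₁q' : (j₁:ℝ) ≤ (q:ℝ) := by exact_mod_cast hj₁q
  have hj₂1 : (1:ℝ) ≤ (j₂:ℝ) := by exact_mod_cast hj₂l
  have hj₂q' : (j₂:ℝ) ≤ (q:ℝ) := by exact_mod_cast hj₂q
  by_cases hk : k ≤ 0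
  · rw [if_pos hk, if_pos hk]
    have hk' : (k:ℝ) ≤ 0 := by exact_mod_cast hk
    have hA : 2*(q:ℝ)*u ≤ -(2*A) := by
      have h1 : -(2*A) = (2*(1-(k:ℝ)))/E := by rw [hAdef]; ring
      have h2 : 2*(q:ℝ)*u = 2/E := by rw [mul_assoc, hqu]; ring
      rw [h1, h2]
      gcongr <;> linarith
    have hint1 : 0 ≤ (u*((-(2*A)) - 2*(q:ℝ)*u))*(2*(q:ℝ)-1) :=
      mul_nonneg (mul_nonneg hu.le (by linarith)) (by linarith)
    have hint2 : 0 ≤ u*u*((q:ℝ)*((q:ℝ)-(j₂:ℝ))) :=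
      mul_nonneg (mul_nonneg hu.le hu.le) (mul_nonneg (by linarith) (by linarith))
    have hint3 : 0 ≤ u*u*((j₁:ℝ)-1) :=
      mul_nonneg (mul_nonneg hu.le hu.le) (by linarith)
    nlinarith [hint1, hint2, hint3, sq_nonneg u, mul_pos hu hu]
  · rw [if_neg hk, if_neg hk]
    nlinarith [hu, hP]

lemma rh_adic (r : ℝ) (hr : 1 < r) (q : ℕ) (hq : 2 ≤ q) :
    ∃ C : ℝ, 0 < C ∧ ∀ m k : ℤ,
      (⨍ x in adicInterval q m k, W x ^ r) ^ (1 / r) ≤ C * ⨍ x in adicInterval q m k, W x := by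
  refine ⟨2, two_pos, fun m k => ?_⟩
  have hP : (2:ℝ) ≤ (q:ℝ) := by exact_mod_cast hq
  have hE : (0:ℝ) < (q:ℝ)^m := zpow_pos (by linarith) m
  set a := ((k:ℝ)-1)/((q:ℝ)^m) with ha
  set b := (k:ℝ)/((q:ℝ)^m) with hb
  have hI : adicInterval q m k = Ico a b := rfl
  have hba : b - a = 1/((q:ℝ)^m) := by
    rw [ha, hb, div_sub_div_same]; ring_nf
  have hab : a < b := by
    have : (0:ℝ) < 1/((q:ℝ)^m) := by positivity
    linarith [hba]
  rw [hI]
  rcases le_or_gt k 0 with hk | hk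
  · have hk' : (k:ℝ) ≤ 0 := by exact_mod_cast hk
    have hb0 : b ≤ 0 := div_nonpos_of_nonpos_of_nonneg hk' hE.le
    have hW : ⨍ x in Ico a b, W x = -(a+b)/2 := by
      rw [avg_eq W hab, int_left hab.le hb0,
        show (a^2-b^2)/2 = (b-a)*(-(a+b)/2) by ring, ← mul_assoc,
        inv_mul_cancel₀ (ne_of_gt (sub_pos.2 hab)), one_mul]
    have hint : ∫ x in Ico a b, W x ^ r ≤ (b-a) * (-a)^r := by
      have hmono := setIntegral_mono_on (Wr_int (by linarith : (0:ℝ) ≤ r) a b)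
        ((integrableOn_const (C := (-a)^r)
          (by rw [Real.volume_Ico]; exact ENNReal.ofReal_ne_top)))
        measurableSet_Ico (fun x hx => ?_)
      · rw [setIntegral_const, measureReal_def, Real.volume_Ico,
          ENNReal.toReal_ofReal (by linarith : (0:ℝ) ≤ b - a), smul_eq_mul] at hmono
        exact hmono
      · rw [W_of_neg (lt_of_lt_of_le hx.2 hb0)]
        exact Real.rpow_le_rpow (by linarith [hx.2, hb0] : (0:ℝ) ≤ -x)
          (by linarith [hx.1] : -x ≤ -a) (by linarith)
    have h0 : 0 ≤ ⨍ x in Ico a b, W x ^ r := by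
      rw [avg_eq _ hab]
      exact mul_nonneg (inv_nonneg.2 (by linarith))
        (setIntegral_nonneg measurableSet_Ico fun x _ => Wr_nonneg r x)
    have havg : ⨍ x in Ico a b, W x ^ r ≤ (-a)^r := by
      rw [avg_eq _ hab]
      calc (b-a)⁻¹ * ∫ x in Ico a b, W x ^ r ≤ (b-a)⁻¹ * ((b-a)*(-a)^r) :=
            mul_le_mul_of_nonneg_left hint (inv_nonneg.2 (by linarith))
        _ = (-a)^r := by
            rw [← mul_assoc, inv_mul_cancel₀ (ne_of_gt (sub_pos.2 hab)), one_mul]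
    have ha0 : (0:ℝ) ≤ -a := by linarith
    calc (⨍ x in Ico a b, W x ^ r)^(1/r) ≤ ((-a)^r)^(1/r) :=
          Real.rpow_le_rpow h0 havg (by positivity)
      _ = -a := by
          rw [← Real.rpow_mul ha0, mul_one_div_cancel (by linarith : r ≠ 0), Real.rpow_one]
      _ ≤ 2 * (-(a+b)/2) := by linarith
      _ = 2 * ⨍ x in Ico a b, W x := by rw [hW]
  · have hk' : (1:ℝ) ≤ (k:ℝ) := by exact_mod_cast hk
    have ha0 : 0 ≤ a := div_nonneg (by linarith) hE.le
    have hW : ⨍ x in Ico a b, W x = 1 := by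
      rw [avg_eq W hab, int_right ha0 hab.le, inv_mul_cancel₀ (ne_of_gt (sub_pos.2 hab))]
    have hWr : ⨍ x in Ico a b, W x ^ r = 1 := by
      rw [avg_eq _ hab, int_rpow_right r ha0 hab.le,
        inv_mul_cancel₀ (ne_of_gt (sub_pos.2 hab))]
    rw [hW, hWr, Real.one_rpow]; linarith

lemma not_rh (s : ℝ) (hs : 1 < s) : ¬ MemRH s W := by
  rintro ⟨C, hC, h⟩
  set D := (3*C/2)^s with hD
  have hDpos : 0 < D := Real.rpow_pos_of_pos (by linarith) s
  set T := min 1 ((1/(2*D+1))^(1/(s-1))) with hT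
  have hT0 : 0 < T := lt_min one_pos (Real.rpow_pos_of_pos (by positivity) _)
  have hT1 : T ≤ 1 := min_le_left _ _
  have hTs : T^(s-1) ≤ 1/(2*D+1) := by
    calc T^(s-1) ≤ ((1/(2*D+1))^(1/(s-1)))^(s-1) :=
          Real.rpow_le_rpow hT0.le (min_le_right _ _) (by linarith)
      _ = 1/(2*D+1) := by
          rw [← Real.rpow_mul (by positivity), one_div_mul_cancel (by linarith : s - 1 ≠ 0),
            Real.rpow_one]
  have hkey : D * T^s < T/2 := by
    have h1 : T^s = T^(s-1) * T := by
      rw [show s = (s-1)+1 by ring]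
      rw [Real.rpow_add hT0, Real.rpow_one]; ring_nf
    have h2 : D * T^(s-1) ≤ D * (1/(2*D+1)) := mul_le_mul_of_nonneg_left hTs hDpos.le
    have h3 : D * (1/(2*D+1)) < 1/2 := by
      rw [mul_one_div, div_lt_div_iff₀ (by positivity) two_pos]; linarith
    calc D*T^s = (D*T^(s-1))*T := by rw [h1]; ring
      _ ≤ (D*(1/(2*D+1)))*T := mul_le_mul_of_nonneg_right h2 hT0.le
      _ < (1/2)*T := mul_lt_mul_of_pos_right h3 hT0
      _ = T/2 := by ring
  have hab : -T < T^2 := by nlinarith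
  have hmain := h (-T) (T^2) hab
  have hiW : ∫ x in Ico (-T) (T^2), W x = 3*T^2/2 := by
    rw [← Set.Ico_union_Ico_eq_Ico (by linarith : -T ≤ (0:ℝ)) (by positivity : (0:ℝ) ≤ T^2),
      setIntegral_union Set.Ico_disjoint_Ico_same measurableSet_Ico (W_int _ _) (W_int _ _),
      int_left (by linarith) le_rfl, int_right le_rfl (by positivity)]
    ring
  have hiWs : T^2 ≤ ∫ x in Ico (-T) (T^2), W x ^ s := by
    rw [← Set.Ico_union_Ico_eq_Ico (by linarith : -T ≤ (0:ℝ)) (by positivity : (0:ℝ) ≤ T^2),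
      setIntegral_union Set.Ico_disjoint_Ico_same measurableSet_Ico
        (Wr_int (by linarith : (0:ℝ) ≤ s) _ _) (Wr_int (by linarith : (0:ℝ) ≤ s) _ _),
      int_rpow_right s le_rfl (by positivity)]
    have hl : 0 ≤ ∫ x in Ico (-T) 0, W x ^ s :=
      setIntegral_nonneg measurableSet_Ico fun x _ => Wr_nonneg s x
    linarith
  have havgW : C * ⨍ x in Ico (-T) (T^2), W x ≤ 3*C/2 * T := by
    rw [avg_eq W hab, hiW]
    have hx : (T^2 - -T)⁻¹ * (3*T^2/2) ≤ 3*T/2 := by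
      rw [inv_mul_le_iff₀ (by nlinarith : (0:ℝ) < T^2 - -T)]
      nlinarith
    calc C * ((T^2 - -T)⁻¹ * (3*T^2/2)) ≤ C * (3*T/2) := mul_le_mul_of_nonneg_left hx hC.le
      _ = 3*C/2 * T := by ring
  have havgWs : T/2 ≤ ⨍ x in Ico (-T) (T^2), W x ^ s := by
    rw [avg_eq _ hab]
    have h4 : T/2 ≤ (T^2 - -T)⁻¹ * T^2 := by
      have hpos : (0:ℝ) < T^2 - -T := by nlinarith
      have hV : (T^2 - -T)⁻¹ * (T^2 - -T) = 1 := inv_mul_cancel₀ hpos.ne'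
      have hint : 0 ≤ (T^2 - -T)⁻¹ * (T^2*(1-T)) :=
        mul_nonneg (inv_pos.2 hpos).le (by nlinarith)
      nlinarith [hV, hint, hT0.le, hT1]
    calc T/2 ≤ (T^2 - -T)⁻¹ * T^2 := h4
      _ ≤ (T^2 - -T)⁻¹ * ∫ x in Ico (-T) (T^2), W x ^ s :=
          mul_le_mul_of_nonneg_left hiWs (inv_nonneg.2 (by nlinarith : (0:ℝ) ≤ T^2 - -T))
  have hchain : (T/2)^(1/s) ≤ 3*C/2*T :=
    calc (T/2)^(1/s) ≤ (⨍ x in Ico (-T) (T^2), W x ^ s)^(1/s) :=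
          Real.rpow_le_rpow (by nlinarith : (0:ℝ) ≤ T/2) havgWs (one_div_nonneg.2 (by linarith))
      _ ≤ C * ⨍ x in Ico (-T) (T^2), W x := hmain
      _ ≤ 3*C/2*T := havgW
  have hcontr : 3*C/2*T < (T/2)^(1/s) := by
    have h6 : (3*C/2*T)^s < T/2 := by
      rw [Real.mul_rpow (by positivity) hT0.le, ← hD]
      exact hkey
    have hbase : (0:ℝ) ≤ 3*C/2*T := by nlinarith
    have h7 := Real.rpow_lt_rpow (Real.rpow_nonneg hbase s) h6
      (one_div_pos.2 (by linarith : (0:ℝ) < s))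
    rwa [← Real.rpow_mul hbase, mul_one_div_cancel (by linarith : s ≠ 0),
      Real.rpow_one] at h7
  linarith

end RHAux

/-- For every `r > 1` and every finite collection of distinct primes `p i`, there exists a
weight belonging to `RH_r^{p i}` for every `i` but to no `RH_s`, `s > 1`; in particular
`⋂ᵢ RH_r^{pᵢ} ≠ RH_r` and `⋂ᵢ RH_1^{pᵢ} ≠ RH_1`. -/
theorem inter_prime_RH_ne_RH (r : ℝ) (hr : 1 < r) (M : ℕ) (p : Fin M → ℕ)
    (hp : ∀ i, (p i).Prime) (hinj : Function.Injective p) :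
    (∃ w : ℝ → ℝ, IsWeight w ∧ (∀ i, MemRHadic r (p i) w) ∧
      ∀ s : ℝ, 1 < s → ¬ MemRH s w) ∧
    {w : ℝ → ℝ | IsWeight w ∧ ∀ i, MemRHadic r (p i) w} ≠
      {w : ℝ → ℝ | IsWeight w ∧ MemRH r w} ∧
    {w : ℝ → ℝ | IsWeight w ∧ ∀ i, ∃ r' : ℝ, 1 < r' ∧ MemRHadic r' (p i) w} ≠
      {w : ℝ → ℝ | IsWeight w ∧ ∃ r' : ℝ, 1 < r' ∧ MemRH r' w} := by
  have hweight : IsWeight RHAux.W := ⟨RHAux.W_nonneg, RHAux.W_loc⟩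
  have hadic : ∀ i, MemRHadic r (p i) RHAux.W := fun i =>
    ⟨RHAux.adic_doubling _ (hp i).two_le, RHAux.rh_adic r hr _ (hp i).two_le⟩
  have hnot : ∀ s : ℝ, 1 < s → ¬ MemRH s RHAux.W := RHAux.not_rh
  refine ⟨⟨RHAux.W, hweight, hadic, hnot⟩, ?_, ?_⟩
  · intro hEq
    have hmem : RHAux.W ∈ {w : ℝ → ℝ | IsWeight w ∧ ∀ i, MemRHadic r (p i) w} :=
      ⟨hweight, hadic⟩
    rw [hEq] at hmem
    exact hnot r hr hmem.2
  · intro hEq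
    have hmem : RHAux.W ∈ {w : ℝ → ℝ | IsWeight w ∧ ∀ i, ∃ r' : ℝ, 1 < r' ∧ MemRHadic r' (p i) w} :=
      ⟨hweight, fun i => ⟨r, hr, hadic i⟩⟩
    rw [hEq] at hmem
    obtain ⟨r', hr', hmemRH⟩ := hmem.2
    exact hnot r' hr' hmemRH
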